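/- For every integer M ≥ 1, lim_{x → ∞} x · e^{x} · Σ_{i=0}^{M−1} E_{i+1}(x) = M. Equivalently, for a noise-limited link with fixed Gamma(M) fading, the ergodic capacity B·e^{aB}·Σ_{i=0}^{M−1} E_{i+1}(aB) (a > 0 fixed) converges to M/a as the bandwidth B tends to infinity. -/

import Mathlib

open MeasureTheory Real Filter Topology

/-- The generalized exponential integral `E_n(x) = ∫_1^∞ e^{-x t} / t^n dt`. -/
noncomputable def expInt (n : ℕ) (x : ℝ) : ℝ :=
  ∫ t in Set.Ioi (1 : ℝ), Real.exp (-x * t) / t ^ n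

lemma integrableOn_expInt_aux (n : ℕ) {x : ℝ} (hx : 0 < x) :
    IntegrableOn (fun t : ℝ => Real.exp (-x * t) / t ^ n) (Set.Ioi 1) := by
  refine Integrable.mono' (exp_neg_integrableOn_Ioi 1 hx) ?_ ?_
  · exact (Measurable.aestronglyMeasurable (by fun_prop) :
      AEStronglyMeasurable (fun t : ℝ => Real.exp (-x * t) / t ^ n) _)
  · filter_upwards [ae_restrict_mem measurableSet_Ioi] with t ht
    have h1 : (1 : ℝ) ≤ t ^ n := one_le_pow₀ (le_of_lt ht)
    have h0 : (0 : ℝ) < t ^ n := lt_of_lt_of_le one_pos h1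
    rw [Real.norm_eq_abs, abs_of_nonneg (div_nonneg (exp_nonneg _) h0.le)]
    calc Real.exp (-x * t) / t ^ n ≤ Real.exp (-x * t) / 1 :=
          div_le_div_of_nonneg_left (exp_nonneg _) one_pos h1
      _ = Real.exp (-x * t) := div_one _

lemma integral_exp_neg_mul_Ioi_one {x : ℝ} (hx : 0 < x) :
    (∫ t in Set.Ioi (1 : ℝ), Real.exp (-x * t)) = Real.exp (-x) / x := by
  have h := integral_comp_mul_left_Ioi (fun y : ℝ => Real.exp (-y)) 1 hx
  simp only [smul_eq_mul, mul_one] at h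
  simp only [neg_mul]
  rw [h, integral_exp_neg_Ioi]
  ring

lemma expInt_upper (n : ℕ) {x : ℝ} (hx : 0 < x) :
    expInt n x ≤ Real.exp (-x) / x := by
  rw [expInt, ← integral_exp_neg_mul_Ioi_one hx]
  refine setIntegral_mono_on (integrableOn_expInt_aux n hx)
    (exp_neg_integrableOn_Ioi 1 hx) measurableSet_Ioi ?_
  intro t ht
  have h1 : (1 : ℝ) ≤ t ^ n := one_le_pow₀ (le_of_lt ht)
  calc Real.exp (-x * t) / t ^ n ≤ Real.exp (-x * t) / 1 :=
        div_le_div_of_nonneg_left (exp_nonneg _) one_pos h1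
    _ = Real.exp (-x * t) := div_one _

lemma integral_exp_neg_mul_Ioc {x δ : ℝ} (hx : 0 < x) (hδ : 0 < δ) :
    (∫ t in Set.Ioc (1 : ℝ) (1 + δ), Real.exp (-x * t))
      = (Real.exp (-x) - Real.exp (-x * (1 + δ))) / x := by
  have h : (1:ℝ) ≤ 1 + δ := by linarith
  rw [← intervalIntegral.integral_of_le h]
  have hderiv : ∀ t ∈ Set.uIcc (1:ℝ) (1 + δ),
      HasDerivAt (fun u : ℝ => -(Real.exp (-x * u) / x)) (Real.exp (-x * t)) t := by
    intro t _
    have h1 : HasDerivAt (fun u : ℝ => -x * u) (-x) t := by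
      simpa using (hasDerivAt_id t).const_mul (-x)
    have h2 := (h1.exp.div_const x).neg
    exact h2.congr_deriv (by rw [mul_neg, neg_div, neg_neg, mul_div_assoc, div_self hx.ne', mul_one])
  have hint : IntervalIntegrable (fun t : ℝ => Real.exp (-x * t)) volume 1 (1 + δ) :=
    (Continuous.intervalIntegrable (by fun_prop) _ _)
  rw [intervalIntegral.integral_eq_sub_of_hasDerivAt hderiv hint]
  field_simp
  ring

lemma expInt_lower (n : ℕ) {x δ : ℝ} (hx : 0 < x) (hδ : 0 < δ) :
    (Real.exp (-x) - Real.exp (-x * (1 + δ))) / (x * (1 + δ) ^ n) ≤ expInt n x := by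
  have hδ1 : (0:ℝ) < 1 + δ := by linarith
  have key : (∫ t in Set.Ioc (1 : ℝ) (1 + δ), Real.exp (-x * t) / (1 + δ) ^ n)
      ≤ expInt n x := by
    have step1 : (∫ t in Set.Ioc (1 : ℝ) (1 + δ), Real.exp (-x * t) / (1 + δ) ^ n)
        ≤ ∫ t in Set.Ioc (1 : ℝ) (1 + δ), Real.exp (-x * t) / t ^ n := by
      refine setIntegral_mono_on
        ((exp_neg_integrableOn_Ioi 1 hx).mono_set Set.Ioc_subset_Ioi_self |>.div_const _)
        ((integrableOn_expInt_aux n hx).mono_set Set.Ioc_subset_Ioi_self)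
        measurableSet_Ioc ?_
      intro t ht
      exact div_le_div_of_nonneg_left (exp_nonneg _)
        (pow_pos (lt_trans one_pos ht.1) n) (pow_le_pow_left₀ (by linarith [ht.1]) ht.2 n)
    have step2 : (∫ t in Set.Ioc (1 : ℝ) (1 + δ), Real.exp (-x * t) / t ^ n)
        ≤ expInt n x := by
      refine setIntegral_mono_set (integrableOn_expInt_aux n hx) ?_
        (HasSubset.Subset.eventuallyLE Set.Ioc_subset_Ioi_self)
      filter_upwards [ae_restrict_mem measurableSet_Ioi] with t ht
      have ht' : (1:ℝ) < t := ht
      exact div_nonneg (exp_nonneg _) (pow_nonneg (by linarith) n)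
    exact le_trans step1 step2
  calc (Real.exp (-x) - Real.exp (-x * (1 + δ))) / (x * (1 + δ) ^ n)
      = (∫ t in Set.Ioc (1 : ℝ) (1 + δ), Real.exp (-x * t)) / (1 + δ) ^ n := by
        rw [integral_exp_neg_mul_Ioc hx hδ]; field_simp
    _ = ∫ t in Set.Ioc (1 : ℝ) (1 + δ), Real.exp (-x * t) / (1 + δ) ^ n := by
        rw [integral_div]
    _ ≤ expInt n x := key

lemma tendsto_sqrt_atTop' : Tendsto Real.sqrt atTop atTop := by
  rw [tendsto_atTop_atTop]
  intro b
  refine ⟨max 0 b ^ 2, fun a ha => (le_max_right 0 b).trans ?_⟩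
  rw [← Real.sqrt_sq (le_max_left 0 b)]
  exact Real.sqrt_le_sqrt ha

lemma tendsto_key (n : ℕ) :
    Tendsto (fun x : ℝ => x * Real.exp x * expInt n x) atTop (𝓝 1) := by
  have hub : ∀ᶠ x : ℝ in atTop, x * Real.exp x * expInt n x ≤ 1 := by
    filter_upwards [eventually_gt_atTop 0] with x hx
    have := expInt_upper n hx
    calc x * Real.exp x * expInt n x ≤ x * Real.exp x * (Real.exp (-x) / x) := by
          exact mul_le_mul_of_nonneg_left this (by positivity)
      _ = 1 := by
          rw [Real.exp_neg]; field_simp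
  have hlb : ∀ᶠ x : ℝ in atTop,
      (1 - Real.exp (-Real.sqrt x)) / (1 + 1 / Real.sqrt x) ^ n
        ≤ x * Real.exp x * expInt n x := by
    filter_upwards [eventually_gt_atTop 0] with x hx
    have hs : 0 < Real.sqrt x := Real.sqrt_pos.mpr hx
    have hδ : (0:ℝ) < 1 / Real.sqrt x := by positivity
    have := expInt_lower n hx hδ
    have h2 : (Real.exp (-x) - Real.exp (-x * (1 + 1 / Real.sqrt x)))
        / (x * (1 + 1 / Real.sqrt x) ^ n) * (x * Real.exp x)
        = (1 - Real.exp (-Real.sqrt x)) / (1 + 1 / Real.sqrt x) ^ n := by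
      have hxx : -x * (1 + 1 / Real.sqrt x) = -x - Real.sqrt x := by
        have h3 : -x * (1 + 1 / Real.sqrt x) = -x + -x / Real.sqrt x := by ring
        rw [h3, neg_div, Real.div_sqrt]; ring
      rw [hxx]
      have e1 : Real.exp (-x - Real.sqrt x) = Real.exp (-x) * Real.exp (-Real.sqrt x) := by
        rw [← Real.exp_add]; ring_nf
      rw [e1, Real.exp_neg x]
      have he : Real.exp x ≠ 0 := (Real.exp_pos x).ne'
      field_simp
    calc (1 - Real.exp (-Real.sqrt x)) / (1 + 1 / Real.sqrt x) ^ n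
        = (Real.exp (-x) - Real.exp (-x * (1 + 1 / Real.sqrt x)))
            / (x * (1 + 1 / Real.sqrt x) ^ n) * (x * Real.exp x) := h2.symm
      _ ≤ expInt n x * (x * Real.exp x) := by
          exact mul_le_mul_of_nonneg_right this (by positivity)
      _ = x * Real.exp x * expInt n x := by ring
  have hl : Tendsto (fun x : ℝ => (1 - Real.exp (-Real.sqrt x)) / (1 + 1 / Real.sqrt x) ^ n)
      atTop (𝓝 1) := by
    have h1 : Tendsto (fun x : ℝ => Real.exp (-Real.sqrt x)) atTop (𝓝 0) := by
      exact Real.tendsto_exp_atBot.comp (tendsto_neg_atBot_iff.mpr tendsto_sqrt_atTop')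
    have h2 : Tendsto (fun x : ℝ => 1 / Real.sqrt x) atTop (𝓝 0) :=
      tendsto_const_nhds.div_atTop tendsto_sqrt_atTop'
    have : Tendsto (fun x : ℝ => (1 - Real.exp (-Real.sqrt x)) / (1 + 1 / Real.sqrt x) ^ n)
        atTop (𝓝 ((1 - 0) / (1 + 0) ^ n)) := by
      exact ((tendsto_const_nhds.sub h1).div ((tendsto_const_nhds.add h2).pow n)
        (by norm_num))
    simpa using this
  exact tendsto_of_tendsto_of_tendsto_of_le_of_le' hl tendsto_const_nhds hlb hub

/-- For every integer `M ≥ 1`, `lim_{x → ∞} x e^x Σ_{i=0}^{M−1} E_{i+1}(x) = M`.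
Equivalently, for fixed `a > 0`, the noise-limited ergodic capacity
`B e^{aB} Σ_{i=0}^{M−1} E_{i+1}(aB)` converges to `M/a` as `B → ∞`. -/
theorem tendsto_mul_exp_mul_sum_expInt (M : ℕ) (hM : 1 ≤ M) :
    Tendsto (fun x : ℝ => x * Real.exp x * ∑ i ∈ Finset.range M, expInt (i + 1) x)
      atTop (𝓝 (M : ℝ)) ∧
    ∀ a : ℝ, 0 < a →
      Tendsto (fun B : ℝ =>
          B * Real.exp (a * B) * ∑ i ∈ Finset.range M, expInt (i + 1) (a * B))
        atTop (𝓝 ((M : ℝ) / a)) := by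
  have hmain : Tendsto (fun x : ℝ => x * Real.exp x * ∑ i ∈ Finset.range M, expInt (i + 1) x)
      atTop (𝓝 (M : ℝ)) := by
    have : Tendsto (fun x : ℝ => ∑ i ∈ Finset.range M, x * Real.exp x * expInt (i + 1) x)
        atTop (𝓝 (∑ _i ∈ Finset.range M, (1 : ℝ))) := by
      exact tendsto_finset_sum _ fun i _ => tendsto_key (i + 1)
    simp only [Finset.sum_const, Finset.card_range, nsmul_eq_mul, mul_one] at this
    refine this.congr fun x => ?_
    rw [Finset.mul_sum]
  refine ⟨hmain, fun a ha => ?_⟩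
  have hcomp : Tendsto (fun B : ℝ =>
      (a * B) * Real.exp (a * B) * ∑ i ∈ Finset.range M, expInt (i + 1) (a * B))
      atTop (𝓝 (M : ℝ)) :=
    hmain.comp (tendsto_id.const_mul_atTop ha)
  rw [show (M : ℝ) / a = (1 / a) * M by ring]
  refine (hcomp.const_mul (1 / a)).congr fun B => ?_
  field_simp
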